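/- The Weyl group W(E_6), realized as the automorphism group of the Schläfli graph, has order 51840. -/

import Mathlib

/-- A 2-element subset of `{1,…,6}` (indexing a line `F_{ij}`, `i<j`). -/
abbrev IndexPair := {s : Finset (Fin 6) // s.card = 2}

/-- Vertices of the Schläfli graph: the 27 lines `E_i`, `F_{ij}`, `G_j`
    on a smooth cubic surface. -/
inductive SchlafliVertex
  | E : Fin 6 → SchlafliVertex
  | F : IndexPair → SchlafliVertex
  | G : Fin 6 → SchlafliVertex
  deriving DecidableEq, Fintype

open SchlafliVertex in
/-- Adjacency (intersection of the corresponding lines). -/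
def schlafliAdj : SchlafliVertex → SchlafliVertex → Bool
  | E i, F s => i ∈ s.1
  | F s, E i => i ∈ s.1
  | E i, G j => i ≠ j
  | G j, E i => i ≠ j
  | F s, F t => s.1 ∩ t.1 = ∅
  | G i, F s => i ∈ s.1
  | F s, G i => i ∈ s.1
  | _, _ => false

/-- The Schläfli graph of the 27 lines on a smooth cubic surface. -/
def schlafliGraph : SimpleGraph SchlafliVertex where
  Adj a b := schlafliAdj a b = true
  symm := by
    have h : ∀ a b, schlafliAdj a b = true → schlafliAdj b a = true := by decide
    exact ⟨fun a b hab => h a b hab⟩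
  loopless := by
    have h : ∀ a, ¬ schlafliAdj a a = true := by decide
    exact ⟨fun a => h a⟩

instance : DecidableRel schlafliGraph.Adj :=
  fun a b => inferInstanceAs (Decidable (_ = true))


namespace SchlafliAux

def masks27 : Fin 27 → Nat := ![130025408, 127957056, 123963520, 116166912, 99951104, 66733056, 8355843, 12349445, 20146185, 36362257, 69580833, 14419718, 22218378, 38438290, 71664546, 26240588, 42489172, 75772772, 50482392, 83962600, 100702704, 2046, 30845, 231611, 823607, 1385007, 1721375]

def adjB (a b : Fin 27) : Bool := (masks27 a).testBit b.1

def g27 : SimpleGraph (Fin 27) where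
  Adj a b := adjB a b = true
  symm := by
    have h : ∀ a b, adjB a b = true → adjB b a = true := by decide
    exact ⟨fun a b hab => h a b hab⟩
  loopless := by
    have h : ∀ a, ¬ adjB a a = true := by decide
    exact ⟨fun a => h a⟩

def tbl (N : Nat) (v : Fin 27) : Fin 27 :=
  ⟨((N >>> (5 * v.1)) &&& 31) % 27, Nat.mod_lt _ (by decide)⟩

abbrev okTbl (F B : Nat) : Prop :=
  (∀ v, tbl B (tbl F v) = v) ∧ (∀ v, tbl F (tbl B v) = v) ∧
  (∀ a b, adjB (tbl F a) (tbl F b) = adjB a b)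

def mkAut (F B : Nat) (h : okTbl F B) : g27 ≃g g27 where
  toEquiv := ⟨tbl F, tbl B, h.1, h.2.1⟩
  map_rel_iff' := by
    intro a b
    show (adjB (tbl F a) (tbl F b) = true) ↔ (adjB a b = true)
    rw [h.2.2]

def fw1 : Fin 27 → Nat := ![36485634846548906633991799739614356408352, 36485633589039511202713541867091552995329, 36485592091229342334402884491611067220994, 36484262903716672545460403972044170003459, 36441727647147484695600596236496356312068, 35080598218721246680758257831838592599045, 29540122791058438520788624374733715147846, 29578545787815313653175542674504378616871, 29619749259538653972309831213015179069480, 29662241718915075495620363692332665636905, 29704776972948962145023714876686884505642, 30934192190175065758660246467462488525835, 30975395661898406077794535005973288978444, 31017888121274827601105067485290775545869, 31060423375308714250508418669644994414606, 32335192007482569732827784627564726846479, 32377684466858991256138317106882213413904, 32420219720892877905541668291236432282641, 33738771098091225004392092692504105780242, 33781306352125111653795443876858324648979, 35142435778016048468181323548891359020052, 14005039142384538163935053726977029975061, 19625179923423601748046214973206138461238, 23840161894132062116450210280819683235927, 26647532958336942329310602146477126162552, 28010033192351696572958847404016870332569, 28053939254586227887461071676499241965754]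
def bw1 : Fin 27 → Nat := ![36485634846548906633991799739614356408352, 36485633589039511202713541867091552995329, 36485553108437924395098911836778591780929, 36481690039207865342635017602677885373505, 36316865755450158872893430345104342780993, 29723894895934426334752754012400294956097, 29068214404434228604356998630424120984905, 29068616807440720022385711531978235389993, 29085356772428538590932135950343331973161, 29662241718915075495620363692332665636905, 34936618406573720389790693039411025774633, 29068630640044069710307647045766179006753, 29085370605031888278847370114276659628321, 29662255551518425183213933063244427135265, 34936632239177070064803594949923755362593, 29085933969240919023196916087860837557313, 29662818915727440703118565631448995439681, 34937195603385598402470998545980815680577, 29682134259860627519325112820393622932545, 34956510946982043915433403444681045740609, 35162541280188536163851178583023981038657, 19625206331120905676928976116612888534721, 19625179923423601748046214973206138461238, 19624737280116728534000643652557403849974, 19609285005071376692198258708597473059062, 19073606136278465502271270619448790524150, 613287731201615090883422233094623895798]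
theorem ok1 : ∀ a, okTbl (fw1 a) (bw1 a) := by decide

def fw2 : Fin 10 → Nat := ![36485634846548906633991799739614356408352, 36485594606248133195740655282183049675840, 36484266676244858835637897892074589586528, 36441732677185066413400329338204661548160, 35080604506268223826180230115224783488160, 33765348558711713673490397415401592521792, 33765308318411179821913299650073224349728, 32404180189365224361259674029146263522336, 32361646232099565536448134022699106668576, 32360318341475203755908143154820393964576]
def bw2 : Fin 10 → Nat := ![36485634846548906633991799739614356408352, 36485594606248133195740655282183049675840, 36483019226802239287510585251498572155968, 36359401015826015970443918353192189037632, 31085024328282574454471634885533538323520, 33765348558711713673490397415401592521792, 33765308318411179821913299650073224349728, 33739554526444253933298611110704642607136, 32956639249207320070211594578852680681504, 9221944156894487004436133542931687131168]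
theorem ok2 : ∀ a, okTbl (fw2 a) (bw2 a) := by decide

def fw3 : Fin 8 → Nat := ![36485634846548906633991799739614356408352, 36484347156846365743250066750134158429216, 36441853398087266897038960422994557603872, 35080765467471117885845323426745006756896, 31703114011606132927409184033031008169440, 33064201943529545371022319938146845995488, 34382796076051013272087737430597933577728, 35742596275213775875059447424987814804000]
def bw3 : Fin 8 → Nat := ![36485634846548906633991799739614356408352, 36484347156846365743250066750134158429216, 36401935017423587888704594557825596918816, 32446152501814023775838747708469458111520, 11303534960979036325646446197983277428256, 11307398030005034744376203277560532285984, 12007901182555632494011577664519139342880, 35742596275213775875059447424987814804000]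
theorem ok3 : ∀ a, okTbl (fw3 a) (bw3 a) := by decide

def fw4 : Fin 4 → Nat := ![36485634846548906633991799739614356408352, 35143820455666212288558000322722380483200, 33782732566923345175006187004493392120416, 33740238850037528224149508090234304367168]
def bw4 : Fin 4 → Nat := ![36485634846548906633991799739614356408352, 35143820455666212288558000322722380483200, 34360905187025522346799786903049814313600, 10626210094981022453658592693606846728832]
theorem ok4 : ∀ a, okTbl (fw4 a) (bw4 a) := by decide

def fw5 : Fin 3 → Nat := ![36485634846548906633991799739614356408352, 36444428777451536551778056135646047766560, 35084628536497116304581781862567789103136]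
def bw5 : Fin 3 → Nat := ![36485634846548906633991799739614356408352, 36444428777451536551778056135646047766560, 33807240433737436221812994797426147723296]
theorem ok5 : ∀ a, okTbl (fw5 a) (bw5 a) := by decide

def fw6 : Fin 2 → Nat := ![36485634846548906633991799739614356408352, 35167040674691856469009269070504406386720]
def bw6 : Fin 2 → Nat := ![36485634846548906633991799739614356408352, 35167040674691856469009269070504406386720]
theorem ok6 : ∀ a, okTbl (fw6 a) (bw6 a) := by decide

def U1 (a : Fin 27) : g27 ≃g g27 := mkAut (fw1 a) (bw1 a) (ok1 a)
def U2 (a : Fin 10) : g27 ≃g g27 := mkAut (fw2 a) (bw2 a) (ok2 a)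
def U3 (a : Fin 8) : g27 ≃g g27 := mkAut (fw3 a) (bw3 a) (ok3 a)
def U4 (a : Fin 4) : g27 ≃g g27 := mkAut (fw4 a) (bw4 a) (ok4 a)
def U5 (a : Fin 3) : g27 ≃g g27 := mkAut (fw5 a) (bw5 a) (ok5 a)
def U6 (a : Fin 2) : g27 ≃g g27 := mkAut (fw6 a) (bw6 a) (ok6 a)

@[simp] theorem U1_apply (a) (x) : U1 a x = tbl (fw1 a) x := rfl
@[simp] theorem U2_apply (a) (x) : U2 a x = tbl (fw2 a) x := rfl
@[simp] theorem U3_apply (a) (x) : U3 a x = tbl (fw3 a) x := rfl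
@[simp] theorem U4_apply (a) (x) : U4 a x = tbl (fw4 a) x := rfl
@[simp] theorem U5_apply (a) (x) : U5 a x = tbl (fw5 a) x := rfl
@[simp] theorem U6_apply (a) (x) : U6 a x = tbl (fw6 a) x := rfl

@[simp] theorem fx2_0 : ∀ a, tbl (fw2 a) (0 : Fin 27) = 0 := by decide
@[simp] theorem fx3_0 : ∀ a, tbl (fw3 a) (0 : Fin 27) = 0 := by decide
@[simp] theorem fx3_6 : ∀ a, tbl (fw3 a) (6 : Fin 27) = 6 := by decide
@[simp] theorem fx4_0 : ∀ a, tbl (fw4 a) (0 : Fin 27) = 0 := by decide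
@[simp] theorem fx4_6 : ∀ a, tbl (fw4 a) (6 : Fin 27) = 6 := by decide
@[simp] theorem fx4_2 : ∀ a, tbl (fw4 a) (2 : Fin 27) = 2 := by decide
@[simp] theorem fx5_0 : ∀ a, tbl (fw5 a) (0 : Fin 27) = 0 := by decide
@[simp] theorem fx5_6 : ∀ a, tbl (fw5 a) (6 : Fin 27) = 6 := by decide
@[simp] theorem fx5_2 : ∀ a, tbl (fw5 a) (2 : Fin 27) = 2 := by decide
@[simp] theorem fx5_7 : ∀ a, tbl (fw5 a) (7 : Fin 27) = 7 := by decide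
@[simp] theorem fx6_0 : ∀ a, tbl (fw6 a) (0 : Fin 27) = 0 := by decide
@[simp] theorem fx6_6 : ∀ a, tbl (fw6 a) (6 : Fin 27) = 6 := by decide
@[simp] theorem fx6_2 : ∀ a, tbl (fw6 a) (2 : Fin 27) = 2 := by decide
@[simp] theorem fx6_7 : ∀ a, tbl (fw6 a) (7 : Fin 27) = 7 := by decide
@[simp] theorem fx6_3 : ∀ a, tbl (fw6 a) (3 : Fin 27) = 3 := by decide

theorem imInj1 : ∀ a b, tbl (fw1 a) (0 : Fin 27) = tbl (fw1 b) 0 → a = b := by decide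
theorem imInj2 : ∀ a b, tbl (fw2 a) (6 : Fin 27) = tbl (fw2 b) 6 → a = b := by decide
theorem imInj3 : ∀ a b, tbl (fw3 a) (2 : Fin 27) = tbl (fw3 b) 2 → a = b := by decide
theorem imInj4 : ∀ a b, tbl (fw4 a) (7 : Fin 27) = tbl (fw4 b) 7 → a = b := by decide
theorem imInj5 : ∀ a b, tbl (fw5 a) (3 : Fin 27) = tbl (fw5 b) 3 → a = b := by decide
theorem imInj6 : ∀ a b, tbl (fw6 a) (16 : Fin 27) = tbl (fw6 b) 16 → a = b := by decide

theorem cov1 : ∀ v : Fin 27, ∃ a, tbl (fw1 a) (0 : Fin 27) = v := by decide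
theorem cov2 : ∀ v : Fin 27, adjB v 0 = adjB 6 0 → ∃ a, tbl (fw2 a) (6 : Fin 27) = v := by decide
theorem cov3 : ∀ v : Fin 27, adjB v 0 = adjB 2 0 → adjB v 6 = adjB 2 6 → ∃ a, tbl (fw3 a) (2 : Fin 27) = v := by decide
theorem cov4 : ∀ v : Fin 27, adjB v 0 = adjB 7 0 → adjB v 6 = adjB 7 6 → adjB v 2 = adjB 7 2 → ∃ a, tbl (fw4 a) (7 : Fin 27) = v := by decide
theorem cov5 : ∀ v : Fin 27, adjB v 0 = adjB 3 0 → adjB v 6 = adjB 3 6 → adjB v 2 = adjB 3 2 → adjB v 7 = adjB 3 7 → ∃ a, tbl (fw5 a) (3 : Fin 27) = v := by decide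
theorem cov6 : ∀ v : Fin 27, adjB v 0 = adjB 16 0 → adjB v 6 = adjB 16 6 → adjB v 2 = adjB 16 2 → adjB v 7 = adjB 16 7 → adjB v 3 = adjB 16 3 → ∃ a, tbl (fw6 a) (16 : Fin 27) = v := by decide

theorem sing7 : ∀ v : Fin 27, adjB v 0 = adjB 1 0 → adjB v 6 = adjB 1 6 → adjB v 2 = adjB 1 2 → adjB v 7 = adjB 1 7 → adjB v 3 = adjB 1 3 → adjB v 16 = adjB 1 16 → v = 1 := by decide
theorem sing8 : ∀ v : Fin 27, adjB v 0 = adjB 4 0 → adjB v 6 = adjB 4 6 → adjB v 2 = adjB 4 2 → adjB v 7 = adjB 4 7 → adjB v 3 = adjB 4 3 → adjB v 16 = adjB 4 16 → adjB v 1 = adjB 4 1 → v = 4 := by decide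
theorem sing9 : ∀ v : Fin 27, adjB v 0 = adjB 8 0 → adjB v 6 = adjB 8 6 → adjB v 2 = adjB 8 2 → adjB v 7 = adjB 8 7 → adjB v 3 = adjB 8 3 → adjB v 16 = adjB 8 16 → adjB v 1 = adjB 8 1 → adjB v 4 = adjB 8 4 → v = 8 := by decide
theorem fpInj : ∀ u v : Fin 27, adjB u 0 = adjB v 0 → adjB u 6 = adjB v 6 → adjB u 2 = adjB v 2 → adjB u 7 = adjB v 7 → adjB u 3 = adjB v 3 → adjB u 16 = adjB v 16 → adjB u 1 = adjB v 1 → adjB u 4 = adjB v 4 → adjB u 8 = adjB v 8 → u = v := by decide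

theorem tblInv {F B : Nat} (h : okTbl F B) : Function.Injective (tbl F) :=
  Function.LeftInverse.injective h.1

theorem adj_pres (ψ : g27 ≃g g27) (a b : Fin 27) : adjB (ψ a) (ψ b) = adjB a b := by
  cases hb : adjB a b with
  | true => exact ψ.map_rel_iff.mpr hb
  | false =>
    cases h2 : adjB (ψ a) (ψ b) with
    | false => rfl
    | true =>
      have : adjB a b = true := ψ.map_rel_iff.mp h2
      rw [hb] at this
      exact this.symm

theorem fixed_inv (ψ : g27 ≃g g27) {x : Fin 27} (h : ψ x = x) : ψ⁻¹ x = x := by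
  conv_lhs => rw [← h]
  exact ψ.inv_apply_self x

abbrev Dom := Fin 27 × Fin 10 × Fin 8 × Fin 4 × Fin 3 × Fin 2

def M (x : Dom) : g27 ≃g g27 :=
  U1 x.1 * U2 x.2.1 * U3 x.2.2.1 * U4 x.2.2.2.1 * U5 x.2.2.2.2.1 * U6 x.2.2.2.2.2

theorem M_inj : Function.Injective M := by
  rintro ⟨a1,a2,a3,a4,a5,a6⟩ ⟨b1,b2,b3,b4,b5,b6⟩ h
  have happ : ∀ v, (U1 a1) ((U2 a2) ((U3 a3) ((U4 a4) ((U5 a5) ((U6 a6) v)))))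
      = (U1 b1) ((U2 b2) ((U3 b3) ((U4 b4) ((U5 b5) ((U6 b6) v))))) := by
    intro v
    have h2 := congrArg (fun ψ : g27 ≃g g27 => ψ v) h
    simpa only [M, RelIso.mul_apply] using h2
  have e1 : a1 = b1 := by
    have h0 := happ 0
    simp only [U1_apply, U2_apply, U3_apply, U4_apply, U5_apply, U6_apply,
      fx2_0, fx3_0, fx4_0, fx5_0, fx6_0] at h0
    exact imInj1 _ _ h0
  subst e1
  have e2 : a2 = b2 := by
    have h0 := happ 6
    simp only [U1_apply, U2_apply, U3_apply, U4_apply, U5_apply, U6_apply,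
      fx3_6, fx4_6, fx5_6, fx6_6] at h0
    exact imInj2 _ _ (tblInv (ok1 a1) h0)
  subst e2
  have e3 : a3 = b3 := by
    have h0 := happ 2
    simp only [U1_apply, U2_apply, U3_apply, U4_apply, U5_apply, U6_apply,
      fx4_2, fx5_2, fx6_2] at h0
    exact imInj3 _ _ (tblInv (ok2 a2) (tblInv (ok1 a1) h0))
  subst e3
  have e4 : a4 = b4 := by
    have h0 := happ 7
    simp only [U1_apply, U2_apply, U3_apply, U4_apply, U5_apply, U6_apply,
      fx5_7, fx6_7] at h0
    exact imInj4 _ _ (tblInv (ok3 a3) (tblInv (ok2 a2) (tblInv (ok1 a1) h0)))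
  subst e4
  have e5 : a5 = b5 := by
    have h0 := happ 3
    simp only [U1_apply, U2_apply, U3_apply, U4_apply, U5_apply, U6_apply,
      fx6_3] at h0
    exact imInj5 _ _ (tblInv (ok4 a4) (tblInv (ok3 a3) (tblInv (ok2 a2) (tblInv (ok1 a1) h0))))
  subst e5
  have e6 : a6 = b6 := by
    have h0 := happ 16
    simp only [U1_apply, U2_apply, U3_apply, U4_apply, U5_apply, U6_apply] at h0
    exact imInj6 _ _ (tblInv (ok5 a5) (tblInv (ok4 a4) (tblInv (ok3 a3)
      (tblInv (ok2 a2) (tblInv (ok1 a1) h0)))))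
  subst e6
  rfl

theorem M_surj : Function.Surjective M := by
  intro φ
  obtain ⟨a1, ha1⟩ := cov1 (φ 0)
  set φ1 := (U1 a1)⁻¹ * φ with hφ1
  have f1_0 : φ1 0 = 0 := by
    have : (U1 a1) 0 = φ 0 := ha1
    show (U1 a1)⁻¹ (φ 0) = 0
    rw [← this]
    exact (U1 a1).inv_apply_self 0
  obtain ⟨a2, ha2⟩ := cov2 (φ1 6) (by
    have h := adj_pres φ1 6 0
    rw [f1_0] at h
    exact h)
  set φ2 := (U2 a2)⁻¹ * φ1 with hφ2
  have U2fix : ∀ x : Fin 27, tbl (fw2 a2) x = x → φ2 x = φ1 x → True := fun _ _ _ => trivial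
  have f2_0 : φ2 0 = 0 := by
    show (U2 a2)⁻¹ (φ1 0) = 0
    rw [f1_0]
    exact fixed_inv (U2 a2) (fx2_0 a2)
  have f2_6 : φ2 6 = 6 := by
    show (U2 a2)⁻¹ (φ1 6) = 6
    rw [← ha2]
    exact (U2 a2).inv_apply_self 6
  obtain ⟨a3, ha3⟩ := cov3 (φ2 2)
    (by have h := adj_pres φ2 2 0; rw [f2_0] at h; exact h)
    (by have h := adj_pres φ2 2 6; rw [f2_6] at h; exact h)
  set φ3 := (U3 a3)⁻¹ * φ2 with hφ3
  have f3_0 : φ3 0 = 0 := by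
    show (U3 a3)⁻¹ (φ2 0) = 0
    rw [f2_0]; exact fixed_inv (U3 a3) (fx3_0 a3)
  have f3_6 : φ3 6 = 6 := by
    show (U3 a3)⁻¹ (φ2 6) = 6
    rw [f2_6]; exact fixed_inv (U3 a3) (fx3_6 a3)
  have f3_2 : φ3 2 = 2 := by
    show (U3 a3)⁻¹ (φ2 2) = 2
    rw [← ha3]; exact (U3 a3).inv_apply_self 2
  obtain ⟨a4, ha4⟩ := cov4 (φ3 7)
    (by have h := adj_pres φ3 7 0; rw [f3_0] at h; exact h)
    (by have h := adj_pres φ3 7 6; rw [f3_6] at h; exact h)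
    (by have h := adj_pres φ3 7 2; rw [f3_2] at h; exact h)
  set φ4 := (U4 a4)⁻¹ * φ3 with hφ4
  have f4_0 : φ4 0 = 0 := by
    show (U4 a4)⁻¹ (φ3 0) = 0
    rw [f3_0]; exact fixed_inv (U4 a4) (fx4_0 a4)
  have f4_6 : φ4 6 = 6 := by
    show (U4 a4)⁻¹ (φ3 6) = 6
    rw [f3_6]; exact fixed_inv (U4 a4) (fx4_6 a4)
  have f4_2 : φ4 2 = 2 := by
    show (U4 a4)⁻¹ (φ3 2) = 2
    rw [f3_2]; exact fixed_inv (U4 a4) (fx4_2 a4)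
  have f4_7 : φ4 7 = 7 := by
    show (U4 a4)⁻¹ (φ3 7) = 7
    rw [← ha4]; exact (U4 a4).inv_apply_self 7
  obtain ⟨a5, ha5⟩ := cov5 (φ4 3)
    (by have h := adj_pres φ4 3 0; rw [f4_0] at h; exact h)
    (by have h := adj_pres φ4 3 6; rw [f4_6] at h; exact h)
    (by have h := adj_pres φ4 3 2; rw [f4_2] at h; exact h)
    (by have h := adj_pres φ4 3 7; rw [f4_7] at h; exact h)
  set φ5 := (U5 a5)⁻¹ * φ4 with hφ5
  have f5_0 : φ5 0 = 0 := by
    show (U5 a5)⁻¹ (φ4 0) = 0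
    rw [f4_0]; exact fixed_inv (U5 a5) (fx5_0 a5)
  have f5_6 : φ5 6 = 6 := by
    show (U5 a5)⁻¹ (φ4 6) = 6
    rw [f4_6]; exact fixed_inv (U5 a5) (fx5_6 a5)
  have f5_2 : φ5 2 = 2 := by
    show (U5 a5)⁻¹ (φ4 2) = 2
    rw [f4_2]; exact fixed_inv (U5 a5) (fx5_2 a5)
  have f5_7 : φ5 7 = 7 := by
    show (U5 a5)⁻¹ (φ4 7) = 7
    rw [f4_7]; exact fixed_inv (U5 a5) (fx5_7 a5)
  have f5_3 : φ5 3 = 3 := by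
    show (U5 a5)⁻¹ (φ4 3) = 3
    rw [← ha5]; exact (U5 a5).inv_apply_self 3
  obtain ⟨a6, ha6⟩ := cov6 (φ5 16)
    (by have h := adj_pres φ5 16 0; rw [f5_0] at h; exact h)
    (by have h := adj_pres φ5 16 6; rw [f5_6] at h; exact h)
    (by have h := adj_pres φ5 16 2; rw [f5_2] at h; exact h)
    (by have h := adj_pres φ5 16 7; rw [f5_7] at h; exact h)
    (by have h := adj_pres φ5 16 3; rw [f5_3] at h; exact h)
  set φ6 := (U6 a6)⁻¹ * φ5 with hφ6
  have f6_0 : φ6 0 = 0 := by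
    show (U6 a6)⁻¹ (φ5 0) = 0
    rw [f5_0]; exact fixed_inv (U6 a6) (fx6_0 a6)
  have f6_6 : φ6 6 = 6 := by
    show (U6 a6)⁻¹ (φ5 6) = 6
    rw [f5_6]; exact fixed_inv (U6 a6) (fx6_6 a6)
  have f6_2 : φ6 2 = 2 := by
    show (U6 a6)⁻¹ (φ5 2) = 2
    rw [f5_2]; exact fixed_inv (U6 a6) (fx6_2 a6)
  have f6_7 : φ6 7 = 7 := by
    show (U6 a6)⁻¹ (φ5 7) = 7
    rw [f5_7]; exact fixed_inv (U6 a6) (fx6_7 a6)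
  have f6_3 : φ6 3 = 3 := by
    show (U6 a6)⁻¹ (φ5 3) = 3
    rw [f5_3]; exact fixed_inv (U6 a6) (fx6_3 a6)
  have f6_16 : φ6 16 = 16 := by
    show (U6 a6)⁻¹ (φ5 16) = 16
    rw [← ha6]; exact (U6 a6).inv_apply_self 16
  have f6_1 : φ6 1 = 1 := by
    apply sing7
    · have h := adj_pres φ6 1 0; rw [f6_0] at h; exact h
    · have h := adj_pres φ6 1 6; rw [f6_6] at h; exact h
    · have h := adj_pres φ6 1 2; rw [f6_2] at h; exact h
    · have h := adj_pres φ6 1 7; rw [f6_7] at h; exact h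
    · have h := adj_pres φ6 1 3; rw [f6_3] at h; exact h
    · have h := adj_pres φ6 1 16; rw [f6_16] at h; exact h
  have f6_4 : φ6 4 = 4 := by
    apply sing8
    · have h := adj_pres φ6 4 0; rw [f6_0] at h; exact h
    · have h := adj_pres φ6 4 6; rw [f6_6] at h; exact h
    · have h := adj_pres φ6 4 2; rw [f6_2] at h; exact h
    · have h := adj_pres φ6 4 7; rw [f6_7] at h; exact h
    · have h := adj_pres φ6 4 3; rw [f6_3] at h; exact h
    · have h := adj_pres φ6 4 16; rw [f6_16] at h; exact h
    · have h := adj_pres φ6 4 1; rw [f6_1] at h; exact h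
  have f6_8 : φ6 8 = 8 := by
    apply sing9
    · have h := adj_pres φ6 8 0; rw [f6_0] at h; exact h
    · have h := adj_pres φ6 8 6; rw [f6_6] at h; exact h
    · have h := adj_pres φ6 8 2; rw [f6_2] at h; exact h
    · have h := adj_pres φ6 8 7; rw [f6_7] at h; exact h
    · have h := adj_pres φ6 8 3; rw [f6_3] at h; exact h
    · have h := adj_pres φ6 8 16; rw [f6_16] at h; exact h
    · have h := adj_pres φ6 8 1; rw [f6_1] at h; exact h
    · have h := adj_pres φ6 8 4; rw [f6_4] at h; exact h
  have hid : φ6 = 1 := by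
    apply RelIso.ext
    intro v
    show φ6 v = v
    apply fpInj
    · have h := adj_pres φ6 v 0; rw [f6_0] at h; exact h
    · have h := adj_pres φ6 v 6; rw [f6_6] at h; exact h
    · have h := adj_pres φ6 v 2; rw [f6_2] at h; exact h
    · have h := adj_pres φ6 v 7; rw [f6_7] at h; exact h
    · have h := adj_pres φ6 v 3; rw [f6_3] at h; exact h
    · have h := adj_pres φ6 v 16; rw [f6_16] at h; exact h
    · have h := adj_pres φ6 v 1; rw [f6_1] at h; exact h
    · have h := adj_pres φ6 v 4; rw [f6_4] at h; exact h
    · have h := adj_pres φ6 v 8; rw [f6_8] at h; exact h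
  refine ⟨(a1, a2, a3, a4, a5, a6), ?_⟩
  have h5 : φ5 = U6 a6 := by
    have := hφ6 ▸ hid
    calc φ5 = U6 a6 * ((U6 a6)⁻¹ * φ5) := by rw [mul_inv_cancel_left]
    _ = U6 a6 * φ6 := by rw [hφ6]
    _ = U6 a6 := by rw [hid, mul_one]
  have h4 : φ4 = U5 a5 * U6 a6 := by
    calc φ4 = U5 a5 * ((U5 a5)⁻¹ * φ4) := by rw [mul_inv_cancel_left]
    _ = U5 a5 * φ5 := by rw [hφ5]
    _ = U5 a5 * U6 a6 := by rw [h5]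
  have h3 : φ3 = U4 a4 * (U5 a5 * U6 a6) := by
    calc φ3 = U4 a4 * ((U4 a4)⁻¹ * φ3) := by rw [mul_inv_cancel_left]
    _ = U4 a4 * φ4 := by rw [hφ4]
    _ = U4 a4 * (U5 a5 * U6 a6) := by rw [h4]
  have h2 : φ2 = U3 a3 * (U4 a4 * (U5 a5 * U6 a6)) := by
    calc φ2 = U3 a3 * ((U3 a3)⁻¹ * φ2) := by rw [mul_inv_cancel_left]
    _ = U3 a3 * φ3 := by rw [hφ3]
    _ = _ := by rw [h3]
  have h1 : φ1 = U2 a2 * (U3 a3 * (U4 a4 * (U5 a5 * U6 a6))) := by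
    calc φ1 = U2 a2 * ((U2 a2)⁻¹ * φ1) := by rw [mul_inv_cancel_left]
    _ = U2 a2 * φ2 := by rw [hφ2]
    _ = _ := by rw [h2]
  have h0 : φ = U1 a1 * (U2 a2 * (U3 a3 * (U4 a4 * (U5 a5 * U6 a6)))) := by
    calc φ = U1 a1 * ((U1 a1)⁻¹ * φ) := by rw [mul_inv_cancel_left]
    _ = U1 a1 * φ1 := by rw [hφ1]
    _ = _ := by rw [h1]
  show U1 a1 * U2 a2 * U3 a3 * U4 a4 * U5 a5 * U6 a6 = φ
  rw [h0]
  simp only [mul_assoc]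

theorem card_aut27 : Nat.card (g27 ≃g g27) = 51840 := by
  rw [← Nat.card_congr (Equiv.ofBijective M ⟨M_inj, M_surj⟩)]
  simp [Nat.card_eq_fintype_card]

end SchlafliAux

namespace SchlafliAux

open SchlafliVertex in
def e0 : Fin 27 → SchlafliVertex := ![E 0, E 1, E 2, E 3, E 4, E 5, F ⟨{0,1}, by decide⟩, F ⟨{0,2}, by decide⟩, F ⟨{0,3}, by decide⟩, F ⟨{0,4}, by decide⟩, F ⟨{0,5}, by decide⟩, F ⟨{1,2}, by decide⟩, F ⟨{1,3}, by decide⟩, F ⟨{1,4}, by decide⟩, F ⟨{1,5}, by decide⟩, F ⟨{2,3}, by decide⟩, F ⟨{2,4}, by decide⟩, F ⟨{2,5}, by decide⟩, F ⟨{3,4}, by decide⟩, F ⟨{3,5}, by decide⟩, F ⟨{4,5}, by decide⟩, G 0, G 1, G 2, G 3, G 4, G 5]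

def e1 (v : SchlafliVertex) : Fin 27 :=
  ⟨((List.finRange 27).findIdx fun i => decide (e0 i = v)) % 27, Nat.mod_lt _ (by decide)⟩

def eqv : Fin 27 ≃ SchlafliVertex where
  toFun := e0
  invFun := e1
  left_inv := by
    have h : ∀ a : Fin 27, e1 (e0 a) = a := by decide
    exact h
  right_inv := by
    have h : ∀ v : SchlafliVertex, e0 (e1 v) = v := by decide
    exact h

theorem key : ∀ a b : Fin 27, schlafliAdj (e0 a) (e0 b) = adjB a b := by decide

def iso : g27 ≃g schlafliGraph where
  toEquiv := eqv
  map_rel_iff' := by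
    intro a b
    show schlafliAdj (e0 a) (e0 b) = true ↔ adjB a b = true
    rw [key a b]

def autEquiv : (schlafliGraph ≃g schlafliGraph) ≃ (g27 ≃g g27) where
  toFun φ := (iso.trans φ).trans iso.symm
  invFun ψ := (iso.symm.trans ψ).trans iso
  left_inv φ := RelIso.ext fun x => by
    simp [RelIso.trans_apply]
  right_inv ψ := RelIso.ext fun x => by
    simp [RelIso.trans_apply]

end SchlafliAux

/-- The Weyl group `W(E₆)`, realized as the automorphism group of the
Schläfli graph, has order 51840. -/
theorem schlafli_automorphism_group_order :
    Nat.card (schlafliGraph ≃g schlafliGraph) = 51840 := by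
  rw [Nat.card_congr SchlafliAux.autEquiv, SchlafliAux.card_aut27]
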